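/- For every n ∈ ℕ, the countable family of operators {M^{(n)}_{x,y} : x, y ∈ ℤ^d} on ℓ²(ℤ^d) ⊗ H satisfies ∑_{x,y ∈ ℤ^d} (M^{(n)}_{x,y})* M^{(n)}_{x,y} = I, where the series converges in the strong operator topology and I is the identity operator on ℓ²(ℤ^d) ⊗ H. -/

import Mathlib

/- Common setup: quantum Bernoulli noises on `ℋ = ℓ²(Γ)`, `Γ` = finite subsets of `ℕ`. -/

noncomputable section

open ContinuousLinearMap Filter

/-- The space `ℋ = ℓ²(Γ)` of square-integrable Bernoulli functionals,
where `Γ` is the set of finite subsets of `ℕ`. -/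
abbrev ℋ : Type := lp (fun _ : Finset ℕ => ℂ) 2

/-- The canonical orthonormal basis `{Z_σ : σ ∈ Γ}` of `ℋ`. -/
def Z (σ : Finset ℕ) : ℋ := lp.single 2 σ 1

/-- `QBN a` says that `a k` is the annihilation operator `∂_k` acting on Bernoulli
functionals: `∂_k Z_σ = 1_σ(k) Z_{σ\k}` and `∂_k* Z_σ = (1 - 1_σ(k)) Z_{σ∪k}`. -/
def QBN (a : ℕ → ℋ →L[ℂ] ℋ) : Prop :=
  (∀ (k : ℕ) (σ : Finset ℕ), a k (Z σ) = if k ∈ σ then Z (σ.erase k) else 0) ∧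
  (∀ (k : ℕ) (σ : Finset ℕ), adjoint (a k) (Z σ) = if k ∈ σ then 0 else Z (insert k σ))

/-- `L_n = (∂_n* + ∂_n - I)/2`. -/
def Lop (a : ℕ → ℋ →L[ℂ] ℋ) (n : ℕ) : ℋ →L[ℂ] ℋ := (2 : ℂ)⁻¹ • (adjoint (a n) + a n - 1)

/-- `R_n = (∂_n* + ∂_n + I)/2`. -/
def Rop (a : ℕ → ℋ →L[ℂ] ℋ) (n : ℕ) : ℋ →L[ℂ] ℋ := (2 : ℂ)⁻¹ • (adjoint (a n) + a n + 1)

/-- `Λ = {-1, 1} ⊆ ℤ`. -/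
def Lam : Finset ℤ := {-1, 1}

/-- `Λ^d`, as a finite set of vectors in `ℤ^d`. -/
def LamD (d : ℕ) : Finset (Fin d → ℤ) := Fintype.piFinset fun _ => Lam

/-- `B_n^{(ε)}`: equals `L_n` if `ε = -1` and `R_n` if `ε = +1`. -/
def Bop (a : ℕ → ℋ →L[ℂ] ℋ) (n : ℕ) (e : ℤ) : ℋ →L[ℂ] ℋ :=
  if e = -1 then Lop a n else Rop a n

/-- A characterization of the `d`-fold Hilbert-space tensor power of `Hs`:
`tpv` is the multilinear map `(u_1, …, u_d) ↦ u_1 ⊗ ⋯ ⊗ u_d`, which satisfies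
`⟪⊗u_j, ⊗v_j⟫ = ∏ ⟪u_j, v_j⟫` and has dense span, and `tp` sends a `d`-tuple of bounded
operators to their tensor product operator, i.e. `(⊗A_j)(⊗u_j) = ⊗(A_j u_j)`. -/
def IsTensorD {Hs : Type} [NormedAddCommGroup Hs] [InnerProductSpace ℂ Hs]
    {d : ℕ} {Hd : Type} [NormedAddCommGroup Hd] [InnerProductSpace ℂ Hd]
    (tpv : MultilinearMap ℂ (fun _ : Fin d => Hs) Hd)
    (tp : (Fin d → Hs →L[ℂ] Hs) → (Hd →L[ℂ] Hd)) : Prop :=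
  (∀ u v : Fin d → Hs, (@inner ℂ _ _ (tpv u) (tpv v)) = ∏ j, (@inner ℂ _ _ (u j) (v j))) ∧
  ((Submodule.span ℂ (Set.range fun u => tpv u)).topologicalClosure = ⊤) ∧
  (∀ (A : Fin d → Hs →L[ℂ] Hs) (u : Fin d → Hs), tp A (tpv u) = tpv fun j => A j (u j))

/-- Conjugation of an operator by a unitary isomorphism `K`: `T ↦ K T K⁻¹`. -/
def conjK {Hs Hd : Type} [NormedAddCommGroup Hs] [InnerProductSpace ℂ Hs]
    [NormedAddCommGroup Hd] [InnerProductSpace ℂ Hd]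
    (K : Hd ≃ₗᵢ[ℂ] Hs) (T : Hd →L[ℂ] Hd) : Hs →L[ℂ] Hs :=
  K.toLinearIsometry.toContinuousLinearMap ∘L T ∘L K.symm.toLinearIsometry.toContinuousLinearMap

/-- `C_n^{(ε)} = K (B_n^{(ε_1)} ⊗ ⋯ ⊗ B_n^{(ε_d)}) K⁻¹` for `ε ∈ Λ^d`. -/
def Cop {d : ℕ} {Hd : Type} [NormedAddCommGroup Hd] [InnerProductSpace ℂ Hd]
    (a : ℕ → ℋ →L[ℂ] ℋ) (tp : (Fin d → ℋ →L[ℂ] ℋ) → (Hd →L[ℂ] Hd))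
    (K : Hd ≃ₗᵢ[ℂ] ℋ) (n : ℕ) (v : Fin d → ℤ) : ℋ →L[ℂ] ℋ :=
  conjK K (tp fun j => Bop a n (v j))

/-- The trace of an operator computed relative to an orthonormal basis `b`:
`Tr T = ∑_i Re ⟪b i, T (b i)⟫` (for positive operators this is the genuine trace). -/
def trB {E : Type} [NormedAddCommGroup E] [InnerProductSpace ℂ E] {ι : Type}
    (b : ι → E) (T : E →L[ℂ] E) : ℝ :=
  ∑' i, (@inner ℂ _ _ (b i) (T (b i))).re

/-- Finiteness (summability) of the trace of `T` relative to the orthonormal basis `b`;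
for a positive operator `T` this says exactly that `T` is of trace class. -/
def HasFiniteTrace {E : Type} [NormedAddCommGroup E] [InnerProductSpace ℂ E] {ι : Type}
    (b : ι → E) (T : E →L[ℂ] E) : Prop :=
  Summable fun i => (@inner ℂ _ _ (b i) (T (b i))).re

/-- The trace on `ℋ`, computed in the canonical ONB `{Z_σ}`. -/
def trH : (ℋ →L[ℂ] ℋ) → ℝ := trB Z

/-- A nucleus with site space `X` on a Hilbert space with orthonormal basis `b`: a family of
positive trace-class operators `ω x` with `∑_x Tr[ω x] = 1`. -/
def IsNucleusOn {E : Type} [NormedAddCommGroup E] [InnerProductSpace ℂ E] [CompleteSpace E]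
    {ι X : Type} (b : ι → E) (ω : X → E →L[ℂ] E) : Prop :=
  (∀ x, (ω x).IsPositive) ∧ (∀ x, HasFiniteTrace b (ω x)) ∧ HasSum (fun x => trB b (ω x)) 1

/-- The one-dimensional map `𝔍_n`: `(𝔍_n ρ)(x) = L_n ρ(x+1) L_n + R_n ρ(x-1) R_n`. -/
def Jmap1 (a : ℕ → ℋ →L[ℂ] ℋ) (n : ℕ) (ρ : ℤ → ℋ →L[ℂ] ℋ) : ℤ → ℋ →L[ℂ] ℋ :=
  fun x => Lop a n * ρ (x + 1) * Lop a n + Rop a n * ρ (x - 1) * Rop a n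

/-- The `d`-dimensional map `𝔍_n^{(d)}`:
`(𝔍_n^{(d)} ω)(x) = ∑_{ε ∈ Λ^d} C_n^{(ε)} ω(x-ε) C_n^{(ε)}`. -/
def JmapD {d : ℕ} {Hd : Type} [NormedAddCommGroup Hd] [InnerProductSpace ℂ Hd]
    (a : ℕ → ℋ →L[ℂ] ℋ) (tp : (Fin d → ℋ →L[ℂ] ℋ) → (Hd →L[ℂ] Hd)) (K : Hd ≃ₗᵢ[ℂ] ℋ)
    (n : ℕ) (ω : (Fin d → ℤ) → ℋ →L[ℂ] ℋ) : (Fin d → ℤ) → ℋ →L[ℂ] ℋ :=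
  fun x => ∑ v ∈ LamD d, Cop a tp K n v * ω (x - v) * Cop a tp K n v

/-- The sequence `ρ⁽⁰⁾ = ρ`, `ρ⁽ⁿ⁺¹⁾ = 𝔍_n ρ⁽ⁿ⁾` generated by `ρ` and `(𝔍_n)`. -/
def seqJ (a : ℕ → ℋ →L[ℂ] ℋ) (ρ : ℤ → ℋ →L[ℂ] ℋ) : ℕ → ℤ → ℋ →L[ℂ] ℋ
  | 0 => ρ
  | n + 1 => Jmap1 a n (seqJ a ρ n)

/-- Regularity of a 1-dimensional nucleus `ρ`:
`lim_n ∑_x e^{itx/√n} Tr[ρ⁽ⁿ⁾(x)] = e^{-t²/2}` for every real `t`. -/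
def Regular (a : ℕ → ℋ →L[ℂ] ℋ) (ρ : ℤ → ℋ →L[ℂ] ℋ) : Prop :=
  ∀ t : ℝ, Tendsto (fun n : ℕ => ∑' x : ℤ,
      Complex.exp (Complex.I * (t : ℂ) * (x : ℂ) / (Real.sqrt n : ℂ)) * (trH (seqJ a ρ n x) : ℂ))
    atTop (nhds (Complex.exp (-(t : ℂ) ^ 2 / 2)))

/-- The rank-one (Dirac) operator `|u⟩⟨v| : w ↦ ⟪v, w⟫ u`. -/
def dyad {E : Type} [NormedAddCommGroup E] [InnerProductSpace ℂ E] (u v : E) : E →L[ℂ] E :=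
  (toSpanSingleton ℂ u).comp (innerSL ℂ v)

/-- `ℓ²(ℤ^d)`. -/
abbrev l2Z (d : ℕ) : Type := lp (fun _ : Fin d → ℤ => ℂ) 2

/-- The canonical orthonormal basis `{δ_x : x ∈ ℤ^d}` of `ℓ²(ℤ^d)`. -/
def deltaV {d : ℕ} (x : Fin d → ℤ) : l2Z d := lp.single 2 x 1

/-- A characterization of the Hilbert-space tensor product `E = ℓ²(ℤ^d) ⊗ Hs`:
`tv` is the bilinear map `(f, u) ↦ f ⊗ u`, with `⟪f⊗u, g⊗v⟫ = ⟪f,g⟫⟪u,v⟫` and dense span,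
and `top2` sends a pair of bounded operators to their tensor product operator:
`(A ⊗ B)(f ⊗ u) = (A f) ⊗ (B u)`. -/
def IsTensor2 {d : ℕ} {Hs E : Type} [NormedAddCommGroup Hs] [InnerProductSpace ℂ Hs]
    [NormedAddCommGroup E] [InnerProductSpace ℂ E]
    (tv : l2Z d →ₗ[ℂ] Hs →ₗ[ℂ] E)
    (top2 : (l2Z d →L[ℂ] l2Z d) → (Hs →L[ℂ] Hs) → (E →L[ℂ] E)) : Prop :=
  (∀ (f g : l2Z d) (u v : Hs),
      (@inner ℂ _ _ (tv f u) (tv g v)) = (@inner ℂ _ _ f g) * (@inner ℂ _ _ u v)) ∧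
  ((Submodule.span ℂ {z : E | ∃ f u, z = tv f u}).topologicalClosure = ⊤) ∧
  (∀ (A : l2Z d →L[ℂ] l2Z d) (B : Hs →L[ℂ] Hs) (f : l2Z d) (u : Hs),
      top2 A B (tv f u) = tv (A f) (B u))

/-- The orthonormal basis `{δ_x ⊗ b_κ}` of the tensor product `ℓ²(ℤ^d) ⊗ Hs` induced by the
canonical basis of `ℓ²(ℤ^d)` and an orthonormal basis `b` of `Hs`. -/
def tbasis {d : ℕ} {Hs E : Type} [NormedAddCommGroup Hs] [InnerProductSpace ℂ Hs]
    [NormedAddCommGroup E] [InnerProductSpace ℂ E]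
    (tv : l2Z d →ₗ[ℂ] Hs →ₗ[ℂ] E) {κ : Type} (b : κ → Hs) : (Fin d → ℤ) × κ → E :=
  fun p => tv (deltaV p.1) (b p.2)

/-- The Kraus operators `M^{(n)}_{x,y} = |δ_x⟩⟨δ_y| ⊗ C_n^{(x-y)}` if `x - y ∈ Λ^d`, else `0`. -/
def Mop {d : ℕ} {Hd E : Type} [NormedAddCommGroup Hd] [InnerProductSpace ℂ Hd]
    [NormedAddCommGroup E] [InnerProductSpace ℂ E]
    (a : ℕ → ℋ →L[ℂ] ℋ) (tp : (Fin d → ℋ →L[ℂ] ℋ) → (Hd →L[ℂ] Hd)) (K : Hd ≃ₗᵢ[ℂ] ℋ)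
    (top2 : (l2Z d →L[ℂ] l2Z d) → (ℋ →L[ℂ] ℋ) → (E →L[ℂ] E))
    (n : ℕ) (x y : Fin d → ℤ) : E →L[ℂ] E :=
  if x - y ∈ LamD d then top2 (dyad (deltaV x) (deltaV y)) (Cop a tp K n (x - y)) else 0

/-- The 1-dimensional nucleus `ρ_σ` concentrated at `0` with value `|Z_σ⟩⟨Z_σ|`. -/
def rhoPoint (σ : Finset ℕ) : ℤ → ℋ →L[ℂ] ℋ := fun x => if x = 0 then dyad (Z σ) (Z σ) else 0

/-- `ℓ²(ℤ^d; ℋ)`, the space of square-summable `ℋ`-valued functions on `ℤ^d`. -/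
abbrev l2ZH (d : ℕ) : Type := lp (fun _ : Fin d → ℤ => ℋ) 2

/-! ### Auxiliary lemmas -/

open scoped InnerProductSpace

set_option linter.unusedSectionVars false

section Helpers
variable {F : Type} [NormedAddCommGroup F] [InnerProductSpace ℂ F] [CompleteSpace F]

lemma adjoint_eq_of_dense {s : Set F} (hs : Dense ((Submodule.span ℂ s : Submodule ℂ F) : Set F))
    (T S : F →L[ℂ] F)
    (h : ∀ x ∈ s, ∀ y ∈ s, ⟪S x, y⟫_ℂ = ⟪x, T y⟫_ℂ) : adjoint T = S := by
  have h1 : ∀ x ∈ s, ∀ y : F, ⟪S x, y⟫_ℂ = ⟪x, T y⟫_ℂ := by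
    intro x hx
    have hkey : innerSL ℂ (S x) = (innerSL ℂ x).comp T :=
      ContinuousLinearMap.ext_on hs (fun y hy => h x hx y hy)
    intro y
    have := ContinuousLinearMap.ext_iff.mp hkey y
    simpa using this
  have h2 : ∀ y : F, ∀ x : F, ⟪S x, y⟫_ℂ = ⟪x, T y⟫_ℂ := by
    intro y
    have hkey : (innerSL ℂ y).comp S = innerSL ℂ (T y) := by
      apply ContinuousLinearMap.ext_on hs
      intro x hx
      show ⟪y, S x⟫_ℂ = ⟪T y, x⟫_ℂ
      rw [← inner_conj_symm y (S x), h1 x hx y, inner_conj_symm (T y) x]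
    intro x
    have := ContinuousLinearMap.ext_iff.mp hkey x
    simp only [ContinuousLinearMap.coe_comp', Function.comp_apply, innerSL_apply_apply] at this
    rw [← inner_conj_symm (S x) y, this, inner_conj_symm x (T y)]
  exact ((ContinuousLinearMap.eq_adjoint_iff S T).mpr (fun x y => h2 y x)).symm

lemma dyad_apply' (u v w : F) : dyad u v w = ⟪v, w⟫_ℂ • u := rfl

lemma dyad_adj (u v : F) : adjoint (dyad u v) = dyad v u := by
  refine ((ContinuousLinearMap.eq_adjoint_iff _ _).mpr fun x y => ?_).symm
  rw [dyad_apply', dyad_apply', inner_smul_left, inner_smul_right, inner_conj_symm]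
  ring

lemma dyad_mul (u v u' v' : F) : dyad u v * dyad u' v' = ⟪v, u'⟫_ℂ • dyad u v' := by
  ext w
  simp only [ContinuousLinearMap.mul_apply, dyad_apply', ContinuousLinearMap.smul_apply,
    inner_smul_right, smul_smul]
  ring_nf

end Helpers

section StepA

lemma denseZ : Dense ((Submodule.span ℂ (Set.range Z) : Submodule ℂ ℋ) : Set ℋ) := by
  intro f
  have hf : HasSum (fun σ => lp.single 2 σ (f σ)) f := lp.hasSum_single (by norm_num) f
  refine mem_closure_of_tendsto hf ?_
  filter_upwards with F
  refine Submodule.sum_mem _ fun σ _ => ?_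
  have : lp.single 2 σ ((f : ∀ σ : Finset ℕ, ℂ) σ) = (f σ : ℂ) • Z σ := by
    rw [Z, ← lp.single_smul]; norm_num
  rw [this]
  exact Submodule.smul_mem _ _ (Submodule.subset_span ⟨σ, rfl⟩)

variable {a : ℕ → ℋ →L[ℂ] ℋ}

lemma hs_sq (ha : QBN a) (n : ℕ) :
    (adjoint (a n) + a n) * (adjoint (a n) + a n) = 1 := by
  apply ContinuousLinearMap.ext_on denseZ
  rintro _ ⟨σ, rfl⟩
  by_cases hk : n ∈ σ
  · simp [ContinuousLinearMap.mul_apply, ContinuousLinearMap.add_apply, ha.1, ha.2, hk,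
      Finset.notMem_erase, Finset.insert_erase hk]
  · simp [ContinuousLinearMap.mul_apply, ContinuousLinearMap.add_apply, ha.1, ha.2, hk,
      Finset.mem_insert_self, Finset.erase_insert hk]

lemma Lop_adj (n : ℕ) : adjoint (Lop a n) = Lop a n := by
  rw [Lop, ← star_eq_adjoint]
  simp only [star_smul, star_sub, star_add, star_one, star_eq_adjoint, adjoint_adjoint]
  congr 1
  · norm_num [Complex.star_def]
  · abel

lemma Rop_adj (n : ℕ) : adjoint (Rop a n) = Rop a n := by
  rw [Rop, ← star_eq_adjoint]
  simp only [star_smul, star_add, star_one, star_eq_adjoint, adjoint_adjoint]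
  congr 1
  · norm_num [Complex.star_def]
  · abel

lemma hLR (ha : QBN a) (n : ℕ) :
    adjoint (Lop a n) * Lop a n + adjoint (Rop a n) * Rop a n = 1 := by
  rw [Lop_adj, Rop_adj, Lop, Rop]
  set s : ℋ →L[ℂ] ℋ := adjoint (a n) + a n with hsdef
  rw [smul_mul_smul_comm, smul_mul_smul_comm, ← smul_add]
  have h4 : (s - 1) * (s - 1) + (s + 1) * (s + 1) = s * s + s * s + 1 + 1 := by noncomm_ring
  rw [h4, hs_sq ha n]
  have : (1 : ℋ →L[ℂ] ℋ) + 1 + 1 + 1 = (4 : ℂ) • 1 := by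
    rw [show (4 : ℂ) = 1 + 1 + 1 + 1 by norm_num, add_smul, add_smul, add_smul, one_smul]
  rw [this, smul_smul]
  norm_num

lemma hBsum (ha : QBN a) (n : ℕ) :
    ∑ e ∈ Lam, adjoint (Bop a n e) * Bop a n e = 1 := by
  rw [Lam, Finset.sum_pair (by norm_num : (-1 : ℤ) ≠ 1)]
  rw [Bop, Bop, if_pos rfl, if_neg (by norm_num)]
  exact hLR ha n

end StepA

section TensorD
variable {Hs : Type} [NormedAddCommGroup Hs] [InnerProductSpace ℂ Hs] [CompleteSpace Hs]
  {d : ℕ} {Hd : Type} [NormedAddCommGroup Hd] [InnerProductSpace ℂ Hd] [CompleteSpace Hd]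
  {tpv : MultilinearMap ℂ (fun _ : Fin d => Hs) Hd}
  {tp : (Fin d → Hs →L[ℂ] Hs) → (Hd →L[ℂ] Hd)}

lemma denseD (h : IsTensorD tpv tp) :
    Dense ((Submodule.span ℂ (Set.range fun u => tpv u) : Submodule ℂ Hd) : Set Hd) :=
  Submodule.dense_iff_topologicalClosure_eq_top.mpr h.2.1

lemma tp_mul (h : IsTensorD tpv tp) (A A' : Fin d → Hs →L[ℂ] Hs) :
    tp A * tp A' = tp (fun j => A j * A' j) := by
  apply ContinuousLinearMap.ext_on (denseD h)
  rintro _ ⟨u, rfl⟩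
  simp [ContinuousLinearMap.mul_apply, h.2.2]

lemma tp_adj (h : IsTensorD tpv tp) (A : Fin d → Hs →L[ℂ] Hs) :
    adjoint (tp A) = tp (fun j => adjoint (A j)) := by
  apply adjoint_eq_of_dense (denseD h)
  rintro _ ⟨u, rfl⟩ _ ⟨v, rfl⟩
  rw [h.2.2, h.2.2, h.1, h.1]
  exact Finset.prod_congr rfl fun j _ => adjoint_inner_left (A j) (v j) (u j)

lemma tp_sum_one (h : IsTensorD tpv tp) (D : ℤ → Hs →L[ℂ] Hs) (Lam' : Finset ℤ)
    (hD : ∑ e ∈ Lam', D e = 1) :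
    ∑ v ∈ Fintype.piFinset (fun _ : Fin d => Lam'), tp (fun j => D (v j)) = 1 := by
  classical
  apply ContinuousLinearMap.ext_on (denseD h)
  rintro _ ⟨u, rfl⟩
  rw [ContinuousLinearMap.sum_apply]
  have h1 : ∀ v ∈ Fintype.piFinset (fun _ : Fin d => Lam'),
      tp (fun j => D (v j)) (tpv u) = tpv (fun j => D (v j) (u j)) := fun v _ => h.2.2 _ u
  rw [Finset.sum_congr rfl h1,
    ← MultilinearMap.map_sum_finset tpv (fun j e => D e (u j)) (fun _ => Lam')]
  have h2 : (fun j => ∑ e ∈ Lam', D e (u j)) = fun j => u j := by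
    funext j
    rw [← ContinuousLinearMap.sum_apply, hD, ContinuousLinearMap.one_apply]
  rw [h2, ContinuousLinearMap.one_apply]

end TensorD

section ConjK
variable {Hs Hd : Type} [NormedAddCommGroup Hs] [InnerProductSpace ℂ Hs] [CompleteSpace Hs]
  [NormedAddCommGroup Hd] [InnerProductSpace ℂ Hd] [CompleteSpace Hd]

lemma conjK_apply (K : Hd ≃ₗᵢ[ℂ] Hs) (T : Hd →L[ℂ] Hd) (x : Hs) :
    conjK K T x = K (T (K.symm x)) := rfl

lemma conjK_mul (K : Hd ≃ₗᵢ[ℂ] Hs) (S T : Hd →L[ℂ] Hd) :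
    conjK K S * conjK K T = conjK K (S * T) := by
  ext x
  simp [ContinuousLinearMap.mul_apply, conjK_apply, K.symm_apply_apply]

lemma conjK_one (K : Hd ≃ₗᵢ[ℂ] Hs) : conjK K 1 = 1 := by
  ext x
  simp [conjK_apply, K.apply_symm_apply]

lemma conjK_sum (K : Hd ≃ₗᵢ[ℂ] Hs) {ι : Type} (s : Finset ι) (T : ι → Hd →L[ℂ] Hd) :
    conjK K (∑ i ∈ s, T i) = ∑ i ∈ s, conjK K (T i) := by
  ext x
  simp [conjK_apply, ContinuousLinearMap.sum_apply, map_sum]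

lemma conjK_adj (K : Hd ≃ₗᵢ[ℂ] Hs) (T : Hd →L[ℂ] Hd) :
    adjoint (conjK K T) = conjK K (adjoint T) := by
  refine ((ContinuousLinearMap.eq_adjoint_iff _ _).mpr fun x y => ?_).symm
  rw [conjK_apply, conjK_apply]
  calc ⟪K (adjoint T (K.symm x)), y⟫_ℂ
      = ⟪K (adjoint T (K.symm x)), K (K.symm y)⟫_ℂ := by rw [K.apply_symm_apply]
    _ = ⟪adjoint T (K.symm x), K.symm y⟫_ℂ := K.inner_map_map _ _
    _ = ⟪K.symm x, T (K.symm y)⟫_ℂ := adjoint_inner_left T (K.symm y) (K.symm x)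
    _ = ⟪K (K.symm x), K (T (K.symm y))⟫_ℂ := (K.inner_map_map _ _).symm
    _ = ⟪x, K (T (K.symm y))⟫_ℂ := by rw [K.apply_symm_apply]

end ConjK

section Delta
variable {d : ℕ}

lemma delta_inner (x y : Fin d → ℤ) :
    ⟪deltaV x, (deltaV y : l2Z d)⟫_ℂ = if x = y then 1 else 0 := by
  classical
  rw [deltaV, deltaV, lp.inner_single_left]
  rw [show ((lp.single 2 y 1 : l2Z d) : ∀ _ : Fin d → ℤ, ℂ) x = if x = y then 1 else 0 by
    rw [lp.single_apply]; split <;> simp_all]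
  simp [RCLike.inner_apply]

/-- Rank-one projection onto `δ_y`. -/
def Pd (y : Fin d → ℤ) : l2Z d →L[ℂ] l2Z d := dyad (deltaV y) (deltaV y)

lemma Pd_apply (y : Fin d → ℤ) (f : l2Z d) :
    Pd y f = lp.single 2 y ((f : ∀ _ : Fin d → ℤ, ℂ) y) := by
  classical
  rw [Pd, dyad_apply', deltaV, lp.inner_single_left]
  rw [show ⟪(1 : ℂ), (f : ∀ _ : Fin d → ℤ, ℂ) y⟫_ℂ = (f : ∀ _ : Fin d → ℤ, ℂ) y by
    simp [RCLike.inner_apply]]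
  rw [← lp.single_smul]
  norm_num

lemma Pd_mul (y y' : Fin d → ℤ) :
    Pd y * Pd (d := d) y' = if y = y' then Pd y else 0 := by
  simp only [Pd]
  rw [dyad_mul, delta_inner]
  by_cases h : y = y'
  · subst h; simp
  · simp [h]

lemma Pd_adj (y : Fin d → ℤ) : adjoint (Pd (d := d) y) = Pd y := dyad_adj _ _

/-- Finite-rank orthogonal projection. -/
def PiF (F : Finset (Fin d → ℤ)) : l2Z d →L[ℂ] l2Z d := ∑ y ∈ F, Pd y

lemma PiF_adj (F : Finset (Fin d → ℤ)) : adjoint (PiF (d := d) F) = PiF F := by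
  simp only [PiF]
  rw [← star_eq_adjoint, star_sum]
  exact Finset.sum_congr rfl fun y _ => by rw [star_eq_adjoint, Pd_adj]

lemma PiF_idem (F : Finset (Fin d → ℤ)) : PiF (d := d) F * PiF F = PiF F := by
  classical
  simp only [PiF]
  rw [Finset.sum_mul_sum]
  have : ∀ y ∈ F, ∑ y' ∈ F, Pd (d := d) y * Pd y' = Pd y := by
    intro y hy
    rw [Finset.sum_congr rfl fun y' _ => Pd_mul y y', Finset.sum_ite_eq, if_pos hy]
  rw [Finset.sum_congr rfl this]

end Delta

section Tensor2
variable {d : ℕ} {Hs E : Type} [NormedAddCommGroup Hs] [InnerProductSpace ℂ Hs]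
  [NormedAddCommGroup E] [InnerProductSpace ℂ E] [CompleteSpace Hs] [CompleteSpace E]
  {tv : l2Z d →ₗ[ℂ] Hs →ₗ[ℂ] E}
  {top2 : (l2Z d →L[ℂ] l2Z d) → (Hs →L[ℂ] Hs) → (E →L[ℂ] E)}

lemma dense2 (h : IsTensor2 tv top2) :
    Dense ((Submodule.span ℂ {z : E | ∃ f u, z = tv f u} : Submodule ℂ E) : Set E) :=
  Submodule.dense_iff_topologicalClosure_eq_top.mpr h.2.1

lemma top2_mul (h : IsTensor2 tv top2) (A A' : l2Z d →L[ℂ] l2Z d) (B B' : Hs →L[ℂ] Hs) :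
    top2 A B * top2 A' B' = top2 (A * A') (B * B') := by
  apply ContinuousLinearMap.ext_on (dense2 h)
  rintro _ ⟨f, u, rfl⟩
  simp [ContinuousLinearMap.mul_apply, h.2.2]

lemma top2_adj (h : IsTensor2 tv top2) (A : l2Z d →L[ℂ] l2Z d) (B : Hs →L[ℂ] Hs) :
    adjoint (top2 A B) = top2 (adjoint A) (adjoint B) := by
  apply adjoint_eq_of_dense (dense2 h)
  rintro _ ⟨f, u, rfl⟩ _ ⟨g, v, rfl⟩
  rw [h.2.2, h.2.2, h.1, h.1, adjoint_inner_left, adjoint_inner_left]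

lemma top2_add1 (h : IsTensor2 tv top2) (A A' : l2Z d →L[ℂ] l2Z d) (B : Hs →L[ℂ] Hs) :
    top2 (A + A') B = top2 A B + top2 A' B := by
  apply ContinuousLinearMap.ext_on (dense2 h)
  rintro _ ⟨f, u, rfl⟩
  simp [h.2.2, map_add]

lemma top2_add2 (h : IsTensor2 tv top2) (A : l2Z d →L[ℂ] l2Z d) (B B' : Hs →L[ℂ] Hs) :
    top2 A (B + B') = top2 A B + top2 A B' := by
  apply ContinuousLinearMap.ext_on (dense2 h)
  rintro _ ⟨f, u, rfl⟩
  simp [h.2.2, map_add]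

lemma top2_zero1 (h : IsTensor2 tv top2) (B : Hs →L[ℂ] Hs) : top2 0 B = 0 := by
  apply ContinuousLinearMap.ext_on (dense2 h)
  rintro _ ⟨f, u, rfl⟩
  simp [h.2.2]

lemma top2_zero2 (h : IsTensor2 tv top2) (A : l2Z d →L[ℂ] l2Z d) : top2 A 0 = 0 := by
  apply ContinuousLinearMap.ext_on (dense2 h)
  rintro _ ⟨f, u, rfl⟩
  simp [h.2.2]

lemma top2_one (h : IsTensor2 tv top2) : top2 1 1 = 1 := by
  apply ContinuousLinearMap.ext_on (dense2 h)
  rintro _ ⟨f, u, rfl⟩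
  simp [h.2.2]

lemma top2_sum1 (h : IsTensor2 tv top2) {ι : Type} (s : Finset ι)
    (A : ι → l2Z d →L[ℂ] l2Z d) (B : Hs →L[ℂ] Hs) :
    top2 (∑ i ∈ s, A i) B = ∑ i ∈ s, top2 (A i) B := by
  classical
  induction s using Finset.induction_on with
  | empty => simpa using top2_zero1 h B
  | insert _ _ hx ih => rw [Finset.sum_insert hx, Finset.sum_insert hx, top2_add1 h, ih]

lemma top2_sum2 (h : IsTensor2 tv top2) {ι : Type} (s : Finset ι)
    (A : l2Z d →L[ℂ] l2Z d) (B : ι → Hs →L[ℂ] Hs) :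
    top2 A (∑ i ∈ s, B i) = ∑ i ∈ s, top2 A (B i) := by
  classical
  induction s using Finset.induction_on with
  | empty => simpa using top2_zero2 h A
  | insert _ _ hx ih => rw [Finset.sum_insert hx, Finset.sum_insert hx, top2_add2 h, ih]

lemma tv_norm (h : IsTensor2 tv top2) (g : l2Z d) (w : Hs) : ‖tv g w‖ = ‖g‖ * ‖w‖ := by
  have h2 := h.1 g g w w
  rw [inner_self_eq_norm_sq_to_K, inner_self_eq_norm_sq_to_K, inner_self_eq_norm_sq_to_K] at h2
  have h3 : ‖tv g w‖ ^ 2 = ‖g‖ ^ 2 * ‖w‖ ^ 2 := by exact_mod_cast h2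
  calc ‖tv g w‖ = Real.sqrt (‖tv g w‖ ^ 2) := (Real.sqrt_sq (norm_nonneg _)).symm
    _ = Real.sqrt ((‖g‖ * ‖w‖) ^ 2) := by rw [h3, mul_pow]
    _ = ‖g‖ * ‖w‖ := Real.sqrt_sq (by positivity)

lemma Qnorm (h : IsTensor2 tv top2) (F : Finset (Fin d → ℤ)) (ζ : E) :
    ‖top2 (PiF F) 1 ζ‖ ≤ ‖ζ‖ := by
  set Q := top2 (PiF F) (1 : Hs →L[ℂ] Hs) with hQ
  have hadj : adjoint Q = Q := by
    rw [hQ, top2_adj h, PiF_adj, show adjoint (1 : Hs →L[ℂ] Hs) = 1 by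
      rw [← star_eq_adjoint, star_one]]
  have hidem : Q * Q = Q := by rw [hQ, top2_mul h, PiF_idem, one_mul]
  have h3 : Q (Q ζ) = Q ζ := by rw [← ContinuousLinearMap.mul_apply, hidem]
  have h1 : ⟪Q ζ, Q ζ⟫_ℂ = ⟪Q ζ, ζ⟫_ℂ := by
    have h2 := adjoint_inner_left Q ζ (Q ζ)
    rw [hadj, h3] at h2
    exact h2.symm
  have h4 : ‖Q ζ‖ ^ 2 ≤ ‖Q ζ‖ * ‖ζ‖ := by
    rw [← inner_self_eq_norm_sq (𝕜 := ℂ), h1]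
    calc RCLike.re ⟪Q ζ, ζ⟫_ℂ ≤ ‖⟪Q ζ, ζ⟫_ℂ‖ := RCLike.re_le_norm _
      _ ≤ ‖Q ζ‖ * ‖ζ‖ := norm_inner_le_norm _ _
  nlinarith [norm_nonneg (Q ζ), norm_nonneg ζ]

lemma tendsto_PiF_span (h : IsTensor2 tv top2) (ζ : E)
    (hζ : ζ ∈ Submodule.span ℂ {z : E | ∃ f u, z = tv f u}) :
    Tendsto (fun F : Finset (Fin d → ℤ) => top2 (PiF F) 1 ζ) atTop (nhds ζ) := by
  classical
  induction hζ using Submodule.span_induction with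
  | mem z hz =>
    obtain ⟨f, u, rfl⟩ := hz
    rw [tendsto_iff_norm_sub_tendsto_zero]
    have heq : ∀ F : Finset (Fin d → ℤ),
        ‖top2 (PiF F) 1 (tv f u) - tv f u‖ = ‖PiF F f - f‖ * ‖u‖ := by
      intro F
      rw [h.2.2, ContinuousLinearMap.one_apply,
        show tv (PiF F f) u - tv f u = tv (PiF F f - f) u by rw [map_sub, LinearMap.sub_apply],
        tv_norm h]
    simp only [heq]
    have hsum : HasSum (fun y => lp.single 2 y ((f : ∀ _ : Fin d → ℤ, ℂ) y)) f :=
      lp.hasSum_single (by norm_num) f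
    have hP : ∀ F : Finset (Fin d → ℤ),
        PiF F f = ∑ y ∈ F, lp.single 2 y ((f : ∀ _ : Fin d → ℤ, ℂ) y) := by
      intro F
      rw [PiF, ContinuousLinearMap.sum_apply]
      exact Finset.sum_congr rfl fun y _ => Pd_apply y f
    have hf0 : Tendsto (fun F : Finset (Fin d → ℤ) => ‖PiF F f - f‖) atTop (nhds 0) := by
      simp only [hP]
      exact tendsto_iff_norm_sub_tendsto_zero.mp hsum
    simpa using hf0.mul_const ‖u‖
  | zero => simpa using tendsto_const_nhds
  | add x y hx hy ihx ihy =>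
    simp only [map_add]
    exact ihx.add ihy
  | smul c x hx ih =>
    simp only [map_smul]
    exact ih.const_smul c

lemma tendsto_PiF (h : IsTensor2 tv top2) (ζ : E) :
    Tendsto (fun F : Finset (Fin d → ℤ) => top2 (PiF F) 1 ζ) atTop (nhds ζ) := by
  rw [Metric.tendsto_atTop]
  intro ε hε
  obtain ⟨ζ', hζ'mem, hζ'close⟩ := (dense2 h).exists_dist_lt ζ (show (0:ℝ) < ε/3 by linarith)
  obtain ⟨F₀, hF₀⟩ := Metric.tendsto_atTop.mp (tendsto_PiF_span h ζ' hζ'mem) (ε/3)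
    (by linarith)
  refine ⟨F₀, fun F hF => ?_⟩
  have hQ3 := hF₀ F hF
  rw [dist_eq_norm] at hζ'close hQ3 ⊢
  have hdecomp : top2 (PiF F) 1 ζ - ζ
      = top2 (PiF F) 1 (ζ - ζ') + (top2 (PiF F) 1 ζ' - ζ') + (ζ' - ζ) := by
    rw [map_sub]; abel
  have hb1 : ‖top2 (PiF F) 1 (ζ - ζ')‖ ≤ ‖ζ - ζ'‖ := Qnorm h F _
  have hb2 : ‖ζ' - ζ‖ = ‖ζ - ζ'‖ := norm_sub_rev _ _
  calc ‖top2 (PiF F) 1 ζ - ζ‖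
      ≤ ‖top2 (PiF F) 1 (ζ - ζ')‖ + ‖top2 (PiF F) 1 ζ' - ζ'‖ + ‖ζ' - ζ‖ := by
        rw [hdecomp]; exact norm_add₃_le
    _ < ε := by linarith

lemma star_hasSum (h : IsTensor2 tv top2) (ζ : E) :
    HasSum (fun y : Fin d → ℤ => top2 (Pd y) 1 ζ) ζ := by
  have hpart : (fun F : Finset (Fin d → ℤ) => ∑ y ∈ F, top2 (Pd y) 1 ζ)
      = fun F => top2 (PiF F) 1 ζ := by
    funext F
    rw [PiF, top2_sum1 h, ContinuousLinearMap.sum_apply]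
  show Tendsto _ atTop _
  rw [hpart]
  exact tendsto_PiF h ζ

end Tensor2

lemma hasSum_prod_fin {α γ M : Type} [Fintype γ] [AddCommMonoid M] [TopologicalSpace M]
    [ContinuousAdd M] {g : γ → α → M} {w : γ → M} (h : ∀ ε, HasSum (g ε) (w ε)) :
    HasSum (fun q : α × γ => g q.2 q.1) (∑ ε, w ε) := by
  classical
  have h1 : ∀ ε : γ, HasSum (fun q : α × γ => if q.2 = ε then g ε q.1 else 0) (w ε) := by
    intro ε
    have hinj : Function.Injective (fun y : α => ((y, ε) : α × γ)) := by
      intro a b hab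
      exact congrArg Prod.fst hab
    refine (Function.Injective.hasSum_iff hinj ?_).mp ?_
    · rintro ⟨y, ε'⟩ hm
      have hne : ε' ≠ ε := by
        intro h'
        exact hm ⟨y, by rw [h']⟩
      simp [hne]
    · have hcomp : ((fun q : α × γ => if q.2 = ε then g ε q.1 else 0) ∘ fun y : α => (y, ε))
          = g ε := by
        funext y
        simp
      rw [hcomp]
      exact h ε
  have h2 := hasSum_sum (s := (Finset.univ : Finset γ)) (fun ε _ => h1 ε)
  have h3 : (fun q : α × γ => ∑ ε ∈ Finset.univ, if q.2 = ε then g ε q.1 else 0)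
      = fun q : α × γ => g q.2 q.1 := by
    funext q
    rw [Finset.sum_ite_eq, if_pos (Finset.mem_univ _)]
  rwa [h3] at h2

set_option maxHeartbeats 2000000

/-- For every `n`, the Kraus family `{M^{(n)}_{x,y}}` satisfies
`∑_{x,y} (M^{(n)}_{x,y})* M^{(n)}_{x,y} = I`, the series converging strongly. -/
theorem stmt8 (a : ℕ → ℋ →L[ℂ] ℋ) (ha : QBN a)
    (d : ℕ) (hd : 2 ≤ d)
    (Hd : Type) [NormedAddCommGroup Hd] [InnerProductSpace ℂ Hd] [CompleteSpace Hd]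
    (tpv : MultilinearMap ℂ (fun _ : Fin d => ℋ) Hd)
    (tp : (Fin d → ℋ →L[ℂ] ℋ) → (Hd →L[ℂ] Hd))
    (htp : IsTensorD tpv tp)
    (K : Hd ≃ₗᵢ[ℂ] ℋ)
    (E : Type) [NormedAddCommGroup E] [InnerProductSpace ℂ E] [CompleteSpace E]
    (tv : l2Z d →ₗ[ℂ] ℋ →ₗ[ℂ] E)
    (top2 : (l2Z d →L[ℂ] l2Z d) → (ℋ →L[ℂ] ℋ) → (E →L[ℂ] E))
    (htp2 : IsTensor2 tv top2) (n : ℕ) :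
    ∀ ξ : E, HasSum (fun p : (Fin d → ℤ) × (Fin d → ℤ) =>
      (ContinuousLinearMap.adjoint (Mop a tp K top2 n p.1 p.2) * Mop a tp K top2 n p.1 p.2) ξ)
      ξ := by
  intro ξ
  classical
  set f : ((Fin d → ℤ) × (Fin d → ℤ)) → E := fun p =>
    (ContinuousLinearMap.adjoint (Mop a tp K top2 n p.1 p.2) * Mop a tp K top2 n p.1 p.2) ξ
    with hf
  show HasSum f ξ
  have hCsum : ∑ v ∈ LamD d, adjoint (Cop a tp K n v) * Cop a tp K n v = 1 := by
    have h1 : ∀ v : Fin d → ℤ, adjoint (Cop a tp K n v) * Cop a tp K n v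
        = conjK K ((tp fun j => adjoint (Bop a n (v j))) * tp fun j => Bop a n (v j)) := by
      intro v
      simp only [Cop]
      rw [conjK_adj, tp_adj htp, conjK_mul]
    calc ∑ v ∈ LamD d, adjoint (Cop a tp K n v) * Cop a tp K n v
        = conjK K (∑ v ∈ LamD d,
            (tp fun j => adjoint (Bop a n (v j))) * tp fun j => Bop a n (v j)) := by
          rw [conjK_sum]
          exact Finset.sum_congr rfl fun v _ => h1 v
      _ = conjK K 1 := by
          congr 1
          have hkey := tp_sum_one htp (fun e => adjoint (Bop a n e) * Bop a n e) Lam (hBsum ha n)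
          rw [show (LamD d) = Fintype.piFinset (fun _ : Fin d => Lam) from rfl, ← hkey]
          exact Finset.sum_congr rfl fun v _ => tp_mul htp _ _
      _ = 1 := conjK_one K
  set ζfun : {v // v ∈ LamD d} → E :=
    fun ε => top2 1 (adjoint (Cop a tp K n ε.1) * Cop a tp K n ε.1) ξ with hζfun
  have hξ : ∑ ε : {v // v ∈ LamD d}, ζfun ε = ξ := by
    rw [hζfun, ← ContinuousLinearMap.sum_apply, ← top2_sum2 htp2,
      Finset.sum_coe_sort (LamD d) (fun v => adjoint (Cop a tp K n v) * Cop a tp K n v),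
      hCsum, top2_one htp2, ContinuousLinearMap.one_apply]
  set ι : ((Fin d → ℤ) × {v // v ∈ LamD d}) → ((Fin d → ℤ) × (Fin d → ℤ)) :=
    fun q => (q.1 + q.2.1, q.1) with hι
  have hinj : Function.Injective ι := by
    rintro ⟨y, ε⟩ ⟨y', ε'⟩ hq
    rw [hι] at hq
    simp only [Prod.mk.injEq] at hq
    obtain ⟨h1, h2⟩ := hq
    subst h2
    exact Prod.ext rfl (Subtype.ext (add_left_cancel h1))
  have hzero : ∀ p ∉ Set.range ι, f p = 0 := by
    rintro ⟨x, y⟩ hp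
    have hmem : x - y ∉ LamD d := by
      intro hmem
      refine hp ⟨(y, ⟨x - y, hmem⟩), ?_⟩
      show (y + (x - y), y) = (x, y)
      have hxy : y + (x - y) = x := by rw [add_comm, sub_add_cancel]
      rw [hxy]
    rw [hf]
    simp only [Mop, if_neg hmem]
    simp
  refine (Function.Injective.hasSum_iff hinj hzero).mp ?_
  have hcomp : f ∘ ι = fun q : (Fin d → ℤ) × {v // v ∈ LamD d} =>
      top2 (Pd q.1) 1 (ζfun q.2) := by
    funext q
    obtain ⟨y, ε⟩ := q
    rw [hf, hι]
    simp only [Function.comp_apply]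
    have hxy : (y + ε.1) - y = ε.1 := add_sub_cancel_left y ε.1
    simp only [Mop, hxy, if_pos ε.2]
    rw [top2_adj htp2, dyad_adj, top2_mul htp2, dyad_mul, delta_inner, if_pos rfl, one_smul]
    have hsplit : top2 (dyad (deltaV y) (deltaV y))
          (adjoint (Cop a tp K n ε.1) * Cop a tp K n ε.1)
        = top2 (Pd y) 1 * top2 1 (adjoint (Cop a tp K n ε.1) * Cop a tp K n ε.1) := by
      rw [top2_mul htp2, mul_one, one_mul, Pd]
    rw [hsplit, ContinuousLinearMap.mul_apply, hζfun]
  rw [hcomp, ← hξ]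
  exact hasSum_prod_fin (fun ε => star_hasSum htp2 (ζfun ε))
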